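/- There exists an absolute constant c > 0 such that for all integers k ≥ 1 and m ≥ 2 the following two statements hold for the range space whose ground set is the set of m-tuples of points of ℝ² (viewed as parametrized polygonal curves) and whose ranges are the Fréchet metric balls { s : Fin m → ℝ² | d_F(γ_s, γ_q) ≤ r } over all tuples q : Fin k → ℝ² and radii r > 0. (a) There exist k tuples S₁, …, S_k : Fin m → ℝ² forming a set shattered by this family of ranges; (b) there exist an integer t ≥ c·log m and t tuples T₁, …, T_t : Fin m → ℝ² forming a set shattered by this family of ranges. Consequently, the VC dimension of this range space is Ω(max(k, log m)). -/

import Mathlib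

/-- A finite set `Y` is shattered by the family of ranges `R` if every subset of `Y`
can be realized as the intersection of `Y` with some range in `R`. -/
def Shatters {X : Type*} (R : Set (Set X)) (Y : Finset X) : Prop :=
  ∀ A ⊆ Y, ∃ B ∈ R, ∀ y ∈ Y, y ∈ B ↔ y ∈ A

/-- The uniform piecewise-linear parametrization of the polygonal curve with vertex
sequence `s : Fin m → ℝ^d`, as a map defined on `[0,1] ⊆ ℝ`: for `m ≥ 2` it satisfies
`param s ((i + t)/(m-1)) = (1-t) • s i + t • s (i+1)` for `0 ≤ i ≤ m-2` and `t ∈ [0,1]`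
(indices 0-based); for `m = 1` it is the constant map with value `s 0`. -/
noncomputable def param {d m : ℕ} (s : Fin m → EuclideanSpace ℝ (Fin d)) (α : ℝ) :
    EuclideanSpace ℝ (Fin d) :=
  if h2 : 2 ≤ m then
    let x : ℝ := α * ((m : ℝ) - 1)
    let i : ℕ := min ⌊x⌋₊ (m - 2)
    (1 - (x - (i : ℝ))) • s ⟨i, by omega⟩ + (x - (i : ℝ)) • s ⟨i + 1, by omega⟩
  else if h1 : 1 ≤ m then s ⟨0, by omega⟩ else 0

/-- The (continuous) Fréchet distance between two parametrized curves `γ σ : [0,1] → ℝ^d`: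
the infimum over pairs of continuous nondecreasing reparametrizations
`f g : [0,1] → [0,1]` with `f 0 = g 0 = 0` and `f 1 = g 1 = 1` of
`sup_{α ∈ [0,1]} dist (γ (f α)) (σ (g α))`. -/
noncomputable def frechetDist {d : ℕ} (γ σ : ℝ → EuclideanSpace ℝ (Fin d)) : ℝ :=
  sInf {x | ∃ f g : ℝ → ℝ,
    ContinuousOn f (Set.Icc 0 1) ∧ ContinuousOn g (Set.Icc 0 1) ∧
    MonotoneOn f (Set.Icc 0 1) ∧ MonotoneOn g (Set.Icc 0 1) ∧
    Set.MapsTo f (Set.Icc 0 1) (Set.Icc 0 1) ∧ Set.MapsTo g (Set.Icc 0 1) (Set.Icc 0 1) ∧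
    f 0 = 0 ∧ g 0 = 0 ∧ f 1 = 1 ∧ g 1 = 1 ∧
    x = ⨆ α : Set.Icc (0 : ℝ) 1, dist (γ (f α)) (σ (g α))}

/-- The weak Fréchet distance: as the Fréchet distance, but the reparametrizations
`f, g` are only required to be continuous (not monotone). -/
noncomputable def weakFrechetDist {d : ℕ} (γ σ : ℝ → EuclideanSpace ℝ (Fin d)) : ℝ :=
  sInf {x | ∃ f g : ℝ → ℝ,
    ContinuousOn f (Set.Icc 0 1) ∧ ContinuousOn g (Set.Icc 0 1) ∧
    Set.MapsTo f (Set.Icc 0 1) (Set.Icc 0 1) ∧ Set.MapsTo g (Set.Icc 0 1) (Set.Icc 0 1) ∧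
    f 0 = 0 ∧ g 0 = 0 ∧ f 1 = 1 ∧ g 1 = 1 ∧
    x = ⨆ α : Set.Icc (0 : ℝ) 1, dist (γ (f α)) (σ (g α))}

section VCAux

/-- Rational parametrization of the unit circle: the point with parameter `n`. -/
noncomputable def Pt (n : ℕ) : EuclideanSpace ℝ (Fin 2) :=
  !₂[(1 - (n:ℝ)^2)/(1 + (n:ℝ)^2), 2*(n:ℝ)/(1 + (n:ℝ)^2)]

lemma dist_sq_eq (x y : EuclideanSpace ℝ (Fin 2)) :
    dist x y ^ 2 = (x 0 - y 0)^2 + (x 1 - y 1)^2 := by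
  rw [EuclideanSpace.dist_eq, Real.sq_sqrt (by positivity)]
  rw [show (Finset.univ : Finset (Fin 2)) = {0, 1} from rfl]
  rw [Finset.sum_insert (by decide), Finset.sum_singleton]
  simp [Real.dist_eq, sq_abs]

lemma dist_Pt_neg (n a : ℕ) :
    dist (Pt n) (-Pt a) ^ 2
      = 4 - 4*((n:ℝ)-(a:ℝ))^2/((1+(n:ℝ)^2)*(1+(a:ℝ)^2)) := by
  have h1 : (0:ℝ) < 1 + (n:ℝ)^2 := by positivity
  have h2 : (0:ℝ) < 1 + (a:ℝ)^2 := by positivity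
  rw [dist_sq_eq]
  show ((Pt n 0) - (-(Pt a 0)))^2 + ((Pt n 1) - (-(Pt a 1)))^2 = _
  unfold Pt
  simp only [PiLp.toLp_apply, Matrix.cons_val_zero, Matrix.cons_val_one, Matrix.head_cons]
  field_simp
  ring

lemma dist_Pt_zero (n : ℕ) : dist (Pt n) (0 : EuclideanSpace ℝ (Fin 2)) = 1 := by
  have h1 : (0:ℝ) < 1 + (n:ℝ)^2 := by positivity
  have h : dist (Pt n) (0 : EuclideanSpace ℝ (Fin 2)) ^ 2 = 1 := by
    rw [dist_sq_eq]
    show ((Pt n 0) - 0)^2 + ((Pt n 1) - 0)^2 = 1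
    unfold Pt
    simp only [PiLp.toLp_apply, Matrix.cons_val_zero, Matrix.cons_val_one, Matrix.head_cons]
    field_simp
    ring
  nlinarith [dist_nonneg (x := Pt n) (y := (0 : EuclideanSpace ℝ (Fin 2)))]

lemma Pt_inj : Function.Injective Pt := by
  intro a b h
  have h0 : (1 - (a:ℝ)^2)/(1 + (a:ℝ)^2) = (1 - (b:ℝ)^2)/(1 + (b:ℝ)^2) := by
    have := congrArg (fun v : EuclideanSpace ℝ (Fin 2) => v 0) h
    simpa only [Pt, PiLp.toLp_apply, Matrix.cons_val_zero] using this
  have h1 : (0:ℝ) < 1 + (a:ℝ)^2 := by positivity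
  have h2 : (0:ℝ) < 1 + (b:ℝ)^2 := by positivity
  have : (a:ℝ)^2 = (b:ℝ)^2 := by
    field_simp at h0; nlinarith
  have : (a:ℝ) = b := by nlinarith [Nat.cast_nonneg (α := ℝ) a, Nat.cast_nonneg (α := ℝ) b]
  exact_mod_cast this

/-- The common radius used for the shattering. -/
noncomputable def rad (M : ℕ) : ℝ := Real.sqrt (4 - 2/(1+(M:ℝ)^2)^2)

lemma rad_sq (M : ℕ) : rad M ^ 2 = 4 - 2/(1+(M:ℝ)^2)^2 := by
  have h1 : (0:ℝ) < (1+(M:ℝ)^2)^2 := by positivity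
  have : (2:ℝ)/(1+(M:ℝ)^2)^2 ≤ 2 := by
    rw [div_le_iff₀ h1]; nlinarith
  rw [rad, Real.sq_sqrt (by linarith)]

lemma one_le_rad (M : ℕ) : 1 ≤ rad M := by
  have h1 : (0:ℝ) < (1+(M:ℝ)^2)^2 := by positivity
  have h : (2:ℝ)/(1+(M:ℝ)^2)^2 ≤ 2 := by rw [div_le_iff₀ h1]; nlinarith
  rw [show (1:ℝ) = Real.sqrt 1 by simp, rad]
  exact Real.sqrt_le_sqrt (by linarith)

lemma rad_pos (M : ℕ) : 0 < rad M := lt_of_lt_of_le one_pos (one_le_rad M)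

lemma dist_Pt_neg_le {n a M : ℕ} (hn : n ≤ M) (ha : a ≤ M) (hne : n ≠ a) :
    dist (Pt n) (-Pt a) ≤ rad M := by
  have hge : 1 ≤ ((n:ℝ)-(a:ℝ))^2 := by
    rcases Nat.lt_or_ge n a with h | h
    · have : (n:ℝ) + 1 ≤ (a:ℝ) := by exact_mod_cast h
      nlinarith
    · have h' : a < n := lt_of_le_of_ne h (Ne.symm hne)
      have : (a:ℝ) + 1 ≤ (n:ℝ) := by exact_mod_cast h'
      nlinarith
  have hnM : (n:ℝ) ≤ M := by exact_mod_cast hn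
  have haM : (a:ℝ) ≤ M := by exact_mod_cast ha
  have hn0 : (0:ℝ) ≤ n := Nat.cast_nonneg n
  have ha0 : (0:ℝ) ≤ a := Nat.cast_nonneg a
  have hD : (0:ℝ) < (1+(n:ℝ)^2)*(1+(a:ℝ)^2) := by positivity
  have h2 : (0:ℝ) < (1+(M:ℝ)^2)^2 := by positivity
  have hn2 : (n:ℝ)^2 ≤ (M:ℝ)^2 := by nlinarith
  have ha2 : (a:ℝ)^2 ≤ (M:ℝ)^2 := by nlinarith
  have hDle : (1+(n:ℝ)^2)*(1+(a:ℝ)^2) ≤ (1+(M:ℝ)^2)^2 := by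
    nlinarith [mul_le_mul hn2 ha2 (by positivity : (0:ℝ) ≤ (a:ℝ)^2)
      (by positivity : (0:ℝ) ≤ (M:ℝ)^2)]
  have hquot : (4:ℝ)/(1+(M:ℝ)^2)^2 ≤ 4*((n:ℝ)-(a:ℝ))^2/((1+(n:ℝ)^2)*(1+(a:ℝ)^2)) := by
    rw [div_le_div_iff₀ h2 hD]
    nlinarith
  have h24 : (2:ℝ)/(1+(M:ℝ)^2)^2 ≤ 4/(1+(M:ℝ)^2)^2 := by
    rw [div_le_div_iff₀ h2 h2]; nlinarith
  have h1 : dist (Pt n) (-Pt a) ^ 2 ≤ rad M ^ 2 := by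
    rw [dist_Pt_neg, rad_sq]; linarith
  nlinarith [dist_nonneg (x := Pt n) (y := -Pt a), one_le_rad M]

lemma rad_lt_dist_self (a M : ℕ) : rad M < dist (Pt a) (-Pt a) := by
  have h1 : dist (Pt a) (-Pt a) ^ 2 = 4 := by
    rw [dist_Pt_neg]; simp
  have h2 : (0:ℝ) < (1+(M:ℝ)^2)^2 := by positivity
  have h3 : rad M ^ 2 < 4 := by
    rw [rad_sq]
    have : (0:ℝ) < 2/(1+(M:ℝ)^2)^2 := by positivity
    linarith
  nlinarith [dist_nonneg (x := Pt a) (y := -Pt a), one_le_rad M]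

lemma image_Icc_eq {g : ℝ → ℝ} (hgc : ContinuousOn g (Set.Icc 0 1))
    (hgM : Set.MapsTo g (Set.Icc 0 1) (Set.Icc 0 1)) (hg0 : g 0 = 0) (hg1 : g 1 = 1) :
    g '' Set.Icc 0 1 = Set.Icc 0 1 := by
  apply subset_antisymm (Set.mapsTo_iff_image_subset.mp hgM)
  have := intermediate_value_Icc zero_le_one hgc
  rw [hg0, hg1] at this
  exact this

lemma iSup_comp_image {F g : ℝ → ℝ} (himg : g '' Set.Icc 0 1 = Set.Icc 0 1) :
    ⨆ α : Set.Icc (0:ℝ) 1, F (g ↑α) = ⨆ α : Set.Icc (0:ℝ) 1, F ↑α := by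
  show sSup _ = sSup _
  congr 1
  have h1 : (Set.range fun α : Set.Icc (0:ℝ) 1 => F (g ↑α))
      = (fun x => F (g x)) '' Set.Icc 0 1 :=
    (Set.image_eq_range (fun x => F (g x)) (Set.Icc 0 1)).symm
  have h2 : (Set.range fun α : Set.Icc (0:ℝ) 1 => F ↑α)
      = F '' Set.Icc 0 1 := (Set.image_eq_range F (Set.Icc 0 1)).symm
  rw [h1, h2, ← Set.image_image F g, himg]

lemma frechet_const_left {d : ℕ} (p : EuclideanSpace ℝ (Fin d))
    (γ : ℝ → EuclideanSpace ℝ (Fin d)) :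
    frechetDist (fun _ => p) γ = ⨆ α : Set.Icc (0:ℝ) 1, dist (γ ↑α) p := by
  set M := ⨆ α : Set.Icc (0:ℝ) 1, dist (γ ↑α) p with hM
  rw [frechetDist]
  have elem_eq : ∀ x ∈ {x | ∃ f g : ℝ → ℝ,
      ContinuousOn f (Set.Icc 0 1) ∧ ContinuousOn g (Set.Icc 0 1) ∧
      MonotoneOn f (Set.Icc 0 1) ∧ MonotoneOn g (Set.Icc 0 1) ∧
      Set.MapsTo f (Set.Icc 0 1) (Set.Icc 0 1) ∧ Set.MapsTo g (Set.Icc 0 1) (Set.Icc 0 1) ∧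
      f 0 = 0 ∧ g 0 = 0 ∧ f 1 = 1 ∧ g 1 = 1 ∧
      x = ⨆ α : Set.Icc (0 : ℝ) 1, dist ((fun _ => p) (f α)) (γ (g α))}, x = M := by
    rintro x ⟨f, g, hfc, hgc, hfm, hgm, hfM, hgM, hf0, hg0, hf1, hg1, hxe⟩
    have himg := image_Icc_eq hgc hgM hg0 hg1
    rw [hxe, hM]
    have : ∀ α : Set.Icc (0:ℝ) 1, dist ((fun _ => p) (f ↑α)) (γ (g ↑α))
        = (fun β => dist (γ β) p) (g ↑α) := by
      intro α; simp [dist_comm]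
    rw [iSup_congr this, iSup_comp_image (F := fun β => dist (γ β) p) himg]
  have mem : M ∈ {x | ∃ f g : ℝ → ℝ,
      ContinuousOn f (Set.Icc 0 1) ∧ ContinuousOn g (Set.Icc 0 1) ∧
      MonotoneOn f (Set.Icc 0 1) ∧ MonotoneOn g (Set.Icc 0 1) ∧
      Set.MapsTo f (Set.Icc 0 1) (Set.Icc 0 1) ∧ Set.MapsTo g (Set.Icc 0 1) (Set.Icc 0 1) ∧
      f 0 = 0 ∧ g 0 = 0 ∧ f 1 = 1 ∧ g 1 = 1 ∧
      x = ⨆ α : Set.Icc (0 : ℝ) 1, dist ((fun _ => p) (f α)) (γ (g α))} := by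
    refine ⟨id, id, continuousOn_id, continuousOn_id, monotoneOn_id, monotoneOn_id,
      Set.mapsTo_id _, Set.mapsTo_id _, rfl, rfl, rfl, rfl, ?_⟩
    rw [hM]
    exact iSup_congr (fun α => by simp [dist_comm])
  apply le_antisymm
  · exact csInf_le ⟨M, fun x hx => le_of_eq (elem_eq x hx).symm⟩ mem
  · exact le_csInf ⟨M, mem⟩ (fun x hx => (elem_eq x hx).ge)

lemma frechet_const_right {d : ℕ} (p : EuclideanSpace ℝ (Fin d))
    (γ : ℝ → EuclideanSpace ℝ (Fin d)) :
    frechetDist γ (fun _ => p) = ⨆ α : Set.Icc (0:ℝ) 1, dist (γ ↑α) p := by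
  set M := ⨆ α : Set.Icc (0:ℝ) 1, dist (γ ↑α) p with hM
  rw [frechetDist]
  have elem_eq : ∀ x ∈ {x | ∃ f g : ℝ → ℝ,
      ContinuousOn f (Set.Icc 0 1) ∧ ContinuousOn g (Set.Icc 0 1) ∧
      MonotoneOn f (Set.Icc 0 1) ∧ MonotoneOn g (Set.Icc 0 1) ∧
      Set.MapsTo f (Set.Icc 0 1) (Set.Icc 0 1) ∧ Set.MapsTo g (Set.Icc 0 1) (Set.Icc 0 1) ∧
      f 0 = 0 ∧ g 0 = 0 ∧ f 1 = 1 ∧ g 1 = 1 ∧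
      x = ⨆ α : Set.Icc (0 : ℝ) 1, dist (γ (f α)) ((fun _ => p) (g α))}, x = M := by
    rintro x ⟨f, g, hfc, hgc, hfm, hgm, hfM, hgM, hf0, hg0, hf1, hg1, hxe⟩
    have himg := image_Icc_eq hfc hfM hf0 hf1
    rw [hxe, hM]
    have : ∀ α : Set.Icc (0:ℝ) 1, dist (γ (f ↑α)) ((fun _ => p) (g ↑α))
        = (fun β => dist (γ β) p) (f ↑α) := by
      intro α; simp
    rw [iSup_congr this, iSup_comp_image (F := fun β => dist (γ β) p) himg]
  have mem : M ∈ {x | ∃ f g : ℝ → ℝ,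
      ContinuousOn f (Set.Icc 0 1) ∧ ContinuousOn g (Set.Icc 0 1) ∧
      MonotoneOn f (Set.Icc 0 1) ∧ MonotoneOn g (Set.Icc 0 1) ∧
      Set.MapsTo f (Set.Icc 0 1) (Set.Icc 0 1) ∧ Set.MapsTo g (Set.Icc 0 1) (Set.Icc 0 1) ∧
      f 0 = 0 ∧ g 0 = 0 ∧ f 1 = 1 ∧ g 1 = 1 ∧
      x = ⨆ α : Set.Icc (0 : ℝ) 1, dist (γ (f α)) ((fun _ => p) (g α))} := by
    refine ⟨id, id, continuousOn_id, continuousOn_id, monotoneOn_id, monotoneOn_id,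
      Set.mapsTo_id _, Set.mapsTo_id _, rfl, rfl, rfl, rfl, ?_⟩
    rw [hM]
    exact iSup_congr (fun α => by simp)
  apply le_antisymm
  · exact csInf_le ⟨M, fun x hx => le_of_eq (elem_eq x hx).symm⟩ mem
  · exact le_csInf ⟨M, mem⟩ (fun x hx => (elem_eq x hx).ge)

end VCAux

section VCAux2

lemma param_eq_of_two_le {d m : ℕ} (h2 : 2 ≤ m) (s : Fin m → EuclideanSpace ℝ (Fin d))
    (α : ℝ) :
    param s α = (1 - (α * ((m : ℝ) - 1) - (min ⌊α * ((m : ℝ) - 1)⌋₊ (m - 2) : ℕ))) •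
        s ⟨min ⌊α * ((m : ℝ) - 1)⌋₊ (m - 2), by omega⟩
      + (α * ((m : ℝ) - 1) - (min ⌊α * ((m : ℝ) - 1)⌋₊ (m - 2) : ℕ)) •
        s ⟨min ⌊α * ((m : ℝ) - 1)⌋₊ (m - 2) + 1, by omega⟩ := by
  rw [param, dif_pos h2]

lemma param_eq_of_one {d m : ℕ} (h2 : ¬ 2 ≤ m) (h1 : 1 ≤ m)
    (s : Fin m → EuclideanSpace ℝ (Fin d)) (α : ℝ) :
    param s α = s ⟨0, by omega⟩ := by
  rw [param, dif_neg h2, dif_pos h1]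

lemma param_const {d m : ℕ} (h1 : 1 ≤ m) (p : EuclideanSpace ℝ (Fin d)) :
    param (fun _ : Fin m => p) = fun _ => p := by
  funext α
  by_cases h2 : 2 ≤ m
  · rw [param_eq_of_two_le h2]
    rw [← add_smul]
    ring_nf
    exact one_smul ℝ p
  · rw [param_eq_of_one h2 h1]

lemma dist_param_le {d m : ℕ} (h1 : 1 ≤ m) (s : Fin m → EuclideanSpace ℝ (Fin d))
    {p : EuclideanSpace ℝ (Fin d)} {b : ℝ} (hb : ∀ i, dist (s i) p ≤ b)
    {α : ℝ} (hα : α ∈ Set.Icc (0:ℝ) 1) : dist (param s α) p ≤ b := by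
  by_cases h2 : 2 ≤ m
  · rw [param_eq_of_two_le h2]
    obtain ⟨hα0, hα1⟩ := hα
    set x := α * ((m : ℝ) - 1) with hx
    have hm1 : (1:ℝ) ≤ (m:ℝ) - 1 := by
      have : (2:ℝ) ≤ (m:ℝ) := by exact_mod_cast h2
      linarith
    have hx0 : 0 ≤ x := by nlinarith
    have hx1 : x ≤ (m:ℝ) - 1 := by nlinarith
    set i0 := min ⌊x⌋₊ (m - 2) with hi0
    set w := x - (i0 : ℝ) with hw
    have hw0 : 0 ≤ w := by
      have h1' : (i0:ℝ) ≤ (⌊x⌋₊ : ℝ) := by exact_mod_cast min_le_left _ _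
      have h2' : (⌊x⌋₊ : ℝ) ≤ x := Nat.floor_le hx0
      simp only [hw]; linarith
    have hw1 : w ≤ 1 := by
      rcases min_cases ⌊x⌋₊ (m - 2) with ⟨he, _⟩ | ⟨he, _⟩
      · have := Nat.lt_floor_add_one x
        rw [hw, hi0, he]
        push_cast
        linarith
      · rw [hw, hi0, he]
        have : ((m - 2 : ℕ) : ℝ) = (m:ℝ) - 2 := by
          have h2' : (2:ℕ) ≤ m := h2
          push_cast [Nat.cast_sub h2']
          ring
        rw [this]
        linarith
    set a := s ⟨i0, by omega⟩
    set c := s ⟨i0 + 1, by omega⟩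
    have key : dist ((1 - w) • a + w • c) p ≤ (1 - w) * dist a p + w * dist c p := by
      have hrw : (1 - w) • a + w • c - p = (1 - w) • (a - p) + w • (c - p) := by
        module
      rw [dist_eq_norm, hrw]
      calc ‖(1 - w) • (a - p) + w • (c - p)‖
          ≤ ‖(1 - w) • (a - p)‖ + ‖w • (c - p)‖ := norm_add_le _ _
        _ = (1 - w) * ‖a - p‖ + w * ‖c - p‖ := by
            rw [norm_smul, norm_smul, Real.norm_eq_abs, Real.norm_eq_abs,
              abs_of_nonneg (by linarith : (0:ℝ) ≤ 1 - w), abs_of_nonneg hw0]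
        _ = (1 - w) * dist a p + w * dist c p := by rw [dist_eq_norm, dist_eq_norm]
    have ha' : dist a p ≤ b := hb _
    have hc' : dist c p ≤ b := hb _
    have h3 := mul_le_mul_of_nonneg_left ha' (by linarith : (0:ℝ) ≤ 1 - w)
    have h4 := mul_le_mul_of_nonneg_left hc' hw0
    calc dist ((1 - w) • a + w • c) p ≤ (1 - w) * dist a p + w * dist c p := key
      _ ≤ b := by nlinarith
  · rw [param_eq_of_one h2 h1]
    exact hb _

lemma param_vertex {d m : ℕ} (h1 : 1 ≤ m) (s : Fin m → EuclideanSpace ℝ (Fin d))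
    (i : Fin m) : ∃ α ∈ Set.Icc (0:ℝ) 1, param s α = s i := by
  by_cases h2 : 2 ≤ m
  · have hm2 : (2:ℝ) ≤ (m:ℝ) := by exact_mod_cast h2
    have hm1 : (0:ℝ) < (m:ℝ) - 1 := by linarith
    refine ⟨(i.val : ℝ)/((m:ℝ)-1), ⟨by positivity, ?_⟩, ?_⟩
    · rw [div_le_one hm1]
      have : (i.val : ℝ) + 1 ≤ (m:ℝ) := by exact_mod_cast i.isLt
      linarith
    · rw [param_eq_of_two_le h2]
      have hx : (i.val : ℝ)/((m:ℝ)-1) * ((m:ℝ)-1) = (i.val : ℝ) :=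
        div_mul_cancel₀ _ (ne_of_gt hm1)
      simp only [hx, Nat.floor_natCast]
      rcases Nat.lt_or_ge i.val (m-1) with hc | hc
      · have hmin : min i.val (m-2) = i.val := min_eq_left (by omega)
        simp only [hmin, sub_self, sub_zero, one_smul, zero_smul, add_zero]
      · have hiv : i.val = m - 1 := by have := i.isLt; omega
        have hmin : min i.val (m-2) = m - 2 := min_eq_right (by omega)
        simp only [hmin]
        have hcast : ((m - 2 : ℕ) : ℝ) = (m:ℝ) - 2 := by
          push_cast [Nat.cast_sub h2]; ring
        have hiv' : (i.val : ℝ) = (m:ℝ) - 1 := by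
          rw [hiv]
          push_cast [Nat.cast_sub (by omega : 1 ≤ m)]; ring
        simp only [hcast, hiv']
        have h1' : (m:ℝ) - 1 - ((m:ℝ) - 2) = 1 := by ring
        rw [h1', show (1:ℝ) - 1 = 0 by ring, zero_smul, one_smul, zero_add]
        have : (⟨m - 2 + 1, by omega⟩ : Fin m) = i :=
          Fin.ext (by show m - 2 + 1 = i.val; omega)
        rw [this]
  · refine ⟨0, by norm_num, ?_⟩
    rw [param_eq_of_one h2 h1]
    have : (⟨0, by omega⟩ : Fin m) = i := Fin.ext (by show 0 = i.val; have := i.isLt; omega)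
    rw [this]

lemma frechet_sup_le_iff {d m : ℕ} (h1 : 1 ≤ m) (s : Fin m → EuclideanSpace ℝ (Fin d))
    (p : EuclideanSpace ℝ (Fin d)) (r : ℝ) :
    (⨆ α : Set.Icc (0:ℝ) 1, dist (param s ↑α) p) ≤ r ↔ ∀ i, dist (s i) p ≤ r := by
  haveI : Nonempty (Set.Icc (0:ℝ) 1) := ⟨⟨0, Set.left_mem_Icc.mpr zero_le_one⟩⟩
  haveI hne : Nonempty (Fin m) := ⟨⟨0, by omega⟩⟩
  constructor
  · intro h i
    obtain ⟨α, hαm, hαe⟩ := param_vertex h1 s i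
    have hb : BddAbove (Set.range fun α : Set.Icc (0:ℝ) 1 => dist (param s ↑α) p) := by
      refine ⟨Finset.univ.sup' Finset.univ_nonempty (fun j => dist (s j) p), ?_⟩
      rintro y ⟨β, rfl⟩
      exact dist_param_le h1 s (fun j => Finset.le_sup' (fun j => dist (s j) p) (Finset.mem_univ j)) β.2
    calc dist (s i) p = dist (param s α) p := by rw [hαe]
      _ ≤ ⨆ α : Set.Icc (0:ℝ) 1, dist (param s ↑α) p := le_ciSup hb ⟨α, hαm⟩
      _ ≤ r := h
  · intro h
    exact ciSup_le (fun α => dist_param_le h1 s h α.2)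

/-- The curve family for the `log m` lower bound. -/
noncomputable def Tcur (t m : ℕ) (e : Finset (Fin t) ≃ Fin (2^t)) (j : Fin t)
    (i : Fin m) : EuclideanSpace ℝ (Fin 2) :=
  if h : i.val < 2^t then (if j ∈ e.symm ⟨i.val, h⟩ then Pt m else Pt i.val) else Pt m

lemma Tcur_val (t m : ℕ) (e : Finset (Fin t) ≃ Fin (2^t)) (j : Fin t) (i : Fin m)
    (h : i.val < 2^t) :
    Tcur t m e j i = if j ∈ e.symm ⟨i.val, h⟩ then Pt m else Pt i.val := by
  rw [Tcur, dif_pos h]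

lemma Tcur_big (t m : ℕ) (e : Finset (Fin t) ≃ Fin (2^t)) (j : Fin t) (i : Fin m)
    (h : ¬ i.val < 2^t) : Tcur t m e j i = Pt m := by
  rw [Tcur, dif_neg h]

lemma Tcur_code (t m : ℕ) (e : Finset (Fin t) ≃ Fin (2^t)) (j : Fin t)
    (B : Finset (Fin t)) (hlt : (e B).val < m) :
    Tcur t m e j ⟨(e B).val, hlt⟩ = if j ∈ B then Pt m else Pt ((e B).val) := by
  rw [Tcur_val t m e j _ (show ((⟨(e B).val, hlt⟩ : Fin m)).val < 2^t from (e B).isLt)]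
  have h1 : (⟨((⟨(e B).val, hlt⟩ : Fin m)).val,
      (show ((⟨(e B).val, hlt⟩ : Fin m)).val < 2^t from (e B).isLt)⟩ : Fin (2^t)) = e B :=
    Fin.ext rfl
  rw [h1, Equiv.symm_apply_apply]

end VCAux2

/-- Lower bounds for Fréchet metric balls on polygonal curves in `ℝ²`: (a) there are `k`
distinct `m`-tuples shattered by the Fréchet balls with centers of complexity `k`, and
(b) there are `t = Ω(log m)` distinct `m`-tuples shattered by this family. Hence the
VC dimension of this range space is `Ω(max (k, log m))`. -/
theorem vc_frechet_lower :
    ∃ c : ℝ, 0 < c ∧ ∀ k m : ℕ, 1 ≤ k → 2 ≤ m →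
      (∃ S : Fin k → (Fin m → EuclideanSpace ℝ (Fin 2)), Function.Injective S ∧
        ∀ A : Finset (Fin k),
          ∃ (q : Fin k → EuclideanSpace ℝ (Fin 2)) (r : ℝ), 0 < r ∧
            ∀ i : Fin k, (frechetDist (param (S i)) (param q) ≤ r ↔ i ∈ A)) ∧
      (∃ t : ℕ, c * Real.log m ≤ (t : ℝ) ∧
        ∃ T : Fin t → (Fin m → EuclideanSpace ℝ (Fin 2)), Function.Injective T ∧
          ∀ A : Finset (Fin t),
            ∃ (q : Fin k → EuclideanSpace ℝ (Fin 2)) (r : ℝ), 0 < r ∧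
              ∀ i : Fin t, (frechetDist (param (T i)) (param q) ≤ r ↔ i ∈ A)) := by
  refine ⟨1/4, by norm_num, fun k m hk hm => ⟨?_, ?_⟩⟩
  · -- part (a)
    refine ⟨fun i _ => Pt i.val, ?_, fun A => ?_⟩
    · intro i j h
      have hPP : Pt i.val = Pt j.val := congrFun h ⟨0, by omega⟩
      exact Fin.ext (Pt_inj hPP)
    · refine ⟨fun l => if l ∈ A then 0 else -Pt l.val, rad k, rad_pos k, fun i => ?_⟩
      have hS : param (fun _ : Fin m => Pt i.val) = fun _ => Pt i.val :=
        param_const (by omega) _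
      rw [hS, frechet_const_left,
        frechet_sup_le_iff (by omega : 1 ≤ k) _ (Pt i.val) (rad k)]
      constructor
      · intro h
        by_contra hA
        have h2 := h i
        rw [if_neg hA, dist_comm] at h2
        exact absurd h2 (not_le.mpr (rad_lt_dist_self i.val k))
      · intro hiA l
        by_cases hl : l ∈ A
        · rw [if_pos hl, dist_comm, dist_Pt_zero]
          exact one_le_rad k
        · rw [if_neg hl, dist_comm]
          refine dist_Pt_neg_le (le_of_lt i.isLt) (le_of_lt l.isLt) ?_
          intro hv
          exact hl (Fin.ext hv ▸ hiA)
  · -- part (b)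
    set t := Nat.log 2 m with htdef
    have ht : 1 ≤ t := Nat.log_pos one_lt_two hm
    have h2t : 2^t ≤ m := Nat.pow_log_le_self 2 (by omega)
    have hmlt : m < 2^(t+1) := Nat.lt_pow_succ_log_self one_lt_two m
    have e : Finset (Fin t) ≃ Fin (2^t) :=
      Fintype.equivFinOfCardEq (by simp [Fintype.card_finset])
    refine ⟨t, ?_, ?_⟩
    · have hm0 : (0:ℝ) < (m:ℝ) := by positivity
      have hcast : ((m:ℕ):ℝ) < (2:ℝ)^(t+1) := by exact_mod_cast hmlt
      have hlt2 : Real.log m < ((t:ℝ)+1) * Real.log 2 := by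
        have h := Real.log_lt_log hm0 hcast
        rw [Real.log_pow] at h
        push_cast at h
        linarith
      have hl2a : Real.log 2 ≤ 1 := by
        linarith [Real.log_le_sub_one_of_pos (by norm_num : (0:ℝ) < 2)]
      have hl2b : (0:ℝ) ≤ Real.log 2 := Real.log_nonneg one_le_two
      have ht1 : (1:ℝ) ≤ (t:ℝ) := by exact_mod_cast ht
      nlinarith [mul_le_mul_of_nonneg_left hl2a (by linarith : (0:ℝ) ≤ (t:ℝ)+1)]
    · refine ⟨Tcur t m e, ?_, fun A => ?_⟩
      · intro j j' hjj
        by_contra hne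
        have hlt : (e {j}).val < m := lt_of_lt_of_le (e {j}).isLt h2t
        have h1 : Tcur t m e j ⟨(e {j}).val, hlt⟩ = Pt m := by
          rw [Tcur_code]
          rw [if_pos (Finset.mem_singleton_self j)]
        have h2 : Tcur t m e j' ⟨(e {j}).val, hlt⟩ = Pt ((e {j}).val) := by
          rw [Tcur_code]
          rw [if_neg (fun hmem => hne (Finset.mem_singleton.mp hmem).symm)]
        have h3 : Pt m = Pt ((e {j}).val) := by rw [← h1, ← h2, hjj]
        have h4 := Pt_inj h3
        have h5 := (e {j}).isLt
        omega
      · have hav : (e A).val < m := lt_of_lt_of_le (e A).isLt h2t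
        refine ⟨fun _ => -Pt ((e A).val), rad m, rad_pos m, fun j => ?_⟩
        have hq : param (fun _ : Fin k => -Pt ((e A).val)) = fun _ => -Pt ((e A).val) :=
          param_const (by omega) _
        rw [hq, frechet_const_right,
          frechet_sup_le_iff (by omega : 1 ≤ m) (Tcur t m e j) (-Pt ((e A).val)) (rad m)]
        constructor
        · intro h
          by_contra hA
          have h2 := h ⟨(e A).val, hav⟩
          rw [Tcur_code, if_neg hA] at h2
          exact absurd h2 (not_le.mpr (rad_lt_dist_self _ m))
        · intro hjA i
          rcases Nat.lt_or_ge i.val (2^t) with hi | hi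
          · rw [Tcur_val t m e j i hi]
            by_cases hmem : j ∈ e.symm ⟨i.val, hi⟩
            · rw [if_pos hmem]
              exact dist_Pt_neg_le le_rfl (le_of_lt hav) (by omega)
            · rw [if_neg hmem]
              refine dist_Pt_neg_le (le_of_lt i.isLt) (le_of_lt hav) ?_
              intro hv
              apply hmem
              have h6 : (⟨i.val, hi⟩ : Fin (2^t)) = e A := Fin.ext hv
              rw [h6, Equiv.symm_apply_apply]
              exact hjA
          · rw [Tcur_big t m e j i (by omega)]
            exact dist_Pt_neg_le le_rfl (le_of_lt hav) (by omega)
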